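/- Let ζ, θ, ω, p, q : ℝ → ℝ be differentiable with, for all t: sin(ζ t) ≠ 0, sin(θ t) ≠ 0, ω′(t) = √(ζ′(t)²·sin(θ t)² + θ′(t)²), p′(t) = sin(ω t)/(sin(ζ t)·sin(θ t)), q′(t) = cos(ω t)/(sin(ζ t)·sin(θ t)). Define G : ℝ² → ℝ² by G(t,s) = (p t − s·sin(ω t), q t − s·cos(ω t)). Then at every (t,s): ‖∂G/∂t‖² = 1/(sin(ζ t)²·sin(θ t)²) + s²·(ζ′(t)²·sin(θ t)² + θ′(t)²), ⟨∂G/∂t, ∂G/∂s⟩ = −1/(sin(ζ t)·sin(θ t)), and ‖∂G/∂s‖ = 1. -/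

import Mathlib

open Real
open scoped RealInnerProductSpace

/-- Euler's parametrization of the planar figure onto which a developable surface
is unfolded. -/
noncomputable def eulerG (ω p q : ℝ → ℝ) (w : ℝ × ℝ) : EuclideanSpace ℝ (Fin 2) :=
  WithLp.toLp 2 ![p w.1 - w.2 * sin (ω w.1),
    q w.1 - w.2 * cos (ω w.1)]

theorem euler_first_fundamental_form_of_unfolded_figure
    (ζ θ ω p q : ℝ → ℝ)
    (hζ : Differentiable ℝ ζ) (hθ : Differentiable ℝ θ) (hω : Differentiable ℝ ω)
    (hp : Differentiable ℝ p) (hq : Differentiable ℝ q)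
    (hsinζ : ∀ t, sin (ζ t) ≠ 0) (hsinθ : ∀ t, sin (θ t) ≠ 0)
    (hω' : ∀ t, deriv ω t = Real.sqrt ((deriv ζ t) ^ 2 * (sin (θ t)) ^ 2 + (deriv θ t) ^ 2))
    (hp' : ∀ t, deriv p t = sin (ω t) / (sin (ζ t) * sin (θ t)))
    (hq' : ∀ t, deriv q t = cos (ω t) / (sin (ζ t) * sin (θ t))) :
    ∀ t s : ℝ,
      ‖deriv (fun t' => eulerG ω p q (t', s)) t‖ ^ 2 =
        1 / ((sin (ζ t)) ^ 2 * (sin (θ t)) ^ 2) +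
          s ^ 2 * ((deriv ζ t) ^ 2 * (sin (θ t)) ^ 2 + (deriv θ t) ^ 2) ∧
      (⟪deriv (fun t' => eulerG ω p q (t', s)) t,
         deriv (fun s' => eulerG ω p q (t, s')) s⟫ : ℝ) =
        -1 / (sin (ζ t) * sin (θ t)) ∧
      ‖deriv (fun s' => eulerG ω p q (t, s')) s‖ = 1 := by
  intro t s
  set v1 : EuclideanSpace ℝ (Fin 2) :=
    WithLp.toLp 2 ![deriv p t - s * (cos (ω t) * deriv ω t),
      deriv q t - s * (-sin (ω t) * deriv ω t)] with hv1
  set v2 : EuclideanSpace ℝ (Fin 2) := WithLp.toLp 2 ![-sin (ω t), -cos (ω t)] with hv2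
  have hd1 : HasDerivAt (fun t' => eulerG ω p q (t', s)) v1 t := by
    rw [show v1 = (PiLp.continuousLinearEquiv 2 ℝ (fun _ : Fin 2 => ℝ)).symm
        (fun i => ![deriv p t - s * (cos (ω t) * deriv ω t),
          deriv q t - s * (-sin (ω t) * deriv ω t)] i) from rfl]
    refine HasFDerivAt.comp_hasDerivAt t
      ((PiLp.continuousLinearEquiv 2 ℝ (fun _ : Fin 2 => ℝ)).symm.toContinuousLinearMap.hasFDerivAt)
      (hasDerivAt_pi.2 fun i => ?_)
    fin_cases i
    · simpa [Pi.sub_def] using ((hp t).hasDerivAt.sub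
        (((hω t).hasDerivAt.sin).const_mul s))
    · simpa [Pi.sub_def] using ((hq t).hasDerivAt.sub
        (((hω t).hasDerivAt.cos).const_mul s))
  have hd2 : HasDerivAt (fun s' => eulerG ω p q (t, s')) v2 s := by
    rw [show v2 = (PiLp.continuousLinearEquiv 2 ℝ (fun _ : Fin 2 => ℝ)).symm
        (fun i => ![-sin (ω t), -cos (ω t)] i) from rfl]
    refine HasFDerivAt.comp_hasDerivAt s
      ((PiLp.continuousLinearEquiv 2 ℝ (fun _ : Fin 2 => ℝ)).symm.toContinuousLinearMap.hasFDerivAt)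
      (hasDerivAt_pi.2 fun i => ?_)
    fin_cases i
    · have h : HasDerivAt (fun s' : ℝ => p t - s' * sin (ω t)) (0 - 1 * sin (ω t)) s :=
        (hasDerivAt_const s (p t)).sub ((hasDerivAt_id s).mul_const _)
      simpa using h
    · have h : HasDerivAt (fun s' : ℝ => q t - s' * cos (ω t)) (0 - 1 * cos (ω t)) s :=
        (hasDerivAt_const s (q t)).sub ((hasDerivAt_id s).mul_const _)
      simpa using h
  rw [hd1.deriv, hd2.deriv]
  have hab : sin (ζ t) * sin (θ t) ≠ 0 := mul_ne_zero (hsinζ t) (hsinθ t)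
  have hE : (deriv ω t) ^ 2 = (deriv ζ t) ^ 2 * (sin (θ t)) ^ 2 + (deriv θ t) ^ 2 := by
    rw [hω' t, sq_sqrt (by positivity)]
  have hsc : sin (ω t) ^ 2 + cos (ω t) ^ 2 = 1 := sin_sq_add_cos_sq _
  have hn1 : ‖v1‖ ^ 2 = v1 0 ^ 2 + v1 1 ^ 2 := by
    rw [← real_inner_self_eq_norm_sq, PiLp.inner_apply, Fin.sum_univ_two]
    simp [RCLike.inner_apply, sq]
  have hn2 : ‖v2‖ ^ 2 = v2 0 ^ 2 + v2 1 ^ 2 := by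
    rw [← real_inner_self_eq_norm_sq, PiLp.inner_apply, Fin.sum_univ_two]
    simp [RCLike.inner_apply, sq]
  refine ⟨?_, ?_, ?_⟩
  · rw [hn1]
    simp only [hv1, Matrix.cons_val_zero, Matrix.cons_val_one, Matrix.head_cons,
      hp' t, hq' t]
    field_simp [hsinζ t, hsinθ t]
    linear_combination
      (1 +
        s ^ 2 * sin (ζ t) ^ 2 * sin (θ t) ^ 2 * deriv ω t ^ 2) * hsc +
      s ^ 2 * sin (ζ t) ^ 2 * sin (θ t) ^ 2 * hE
  · rw [PiLp.inner_apply, Fin.sum_univ_two]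
    simp only [hv1, hv2, RCLike.inner_apply, starRingEnd_apply, star_trivial,
      Matrix.cons_val_zero, Matrix.cons_val_one, Matrix.head_cons, hp' t, hq' t]
    field_simp [hsinζ t, hsinθ t]
    linear_combination (-1) * hsc
  · have h2 : ‖v2‖ ^ 2 = 1 := by
      rw [hn2]
      simp only [hv2, Matrix.cons_val_zero, Matrix.cons_val_one, Matrix.head_cons]
      linear_combination hsc
    rw [← Real.sqrt_one, ← h2, Real.sqrt_sq (norm_nonneg v2)]
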